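/- arXiv:2403.09556 — 3 statements merged into one kernel-verified Lean document; each statement's English description precedes it below -/
import Mathlib

section
/- If R is a memoryless alternating simulation relation (WFRR) from S1 to S2 and R is a strict relation (i.e., R(x1) is nonempty for all x1), then R is an alternating simulation relation (ASR) from S1 to S2. -/
open Set

/-- Available inputs of a transition control system given by transition map `F`. -/
def avail {X U : Type*} (F : X → U → Set X) (x : X) : Set U := {u | (F x u).Nonempty}

/-- Image of a set under a relation. -/
def img {X1 X2 : Type*} (R : Set (X1 × X2)) (A : Set X1) : Set X2 :=
  {x2 | ∃ x1 ∈ A, (x1, x2) ∈ R}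

/-- `R` is strict: every concrete state is related to some abstract state. -/
def Strict {X1 X2 : Type*} (R : Set (X1 × X2)) : Prop := ∀ x1, ∃ x2, (x1, x2) ∈ R

/-- Alternating simulation relation. -/
def ASR {X1 U1 X2 U2 : Type*} (F1 : X1 → U1 → Set X1) (F2 : X2 → U2 → Set X2)
    (R : Set (X1 × X2)) : Prop :=
  ∀ x1 x2, (x1, x2) ∈ R → ∀ u2 ∈ avail F2 x2, ∃ u1 ∈ avail F1 x1,
    ∀ x1' ∈ F1 x1 u1, ∃ x2' ∈ F2 x2 u2, (x1', x2') ∈ R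

/-- Memoryless alternating simulation relation. -/
def WFRR {X1 U1 X2 U2 : Type*} (F1 : X1 → U1 → Set X1) (F2 : X2 → U2 → Set X2)
    (R : Set (X1 × X2)) : Prop :=
  ∀ x1 x2, (x1, x2) ∈ R → ∀ u2 ∈ avail F2 x2, ∃ u1 ∈ avail F1 x1,
    ∀ x1' ∈ F1 x1 u1, ∀ x2', (x1', x2') ∈ R → x2' ∈ F2 x2 u2

theorem wfrr_strict_implies_asr {X1 U1 X2 U2 : Type*}
    (F1 : X1 → U1 → Set X1) (F2 : X2 → U2 → Set X2) (R : Set (X1 × X2))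
    (hstrict : Strict R) (h : WFRR F1 F2 R) : ASR F1 F2 R := by
  intro x1 x2 hR u2 hu2
  obtain ⟨u1, hu1, hprop⟩ := h x1 x2 hR u2 hu2
  exact ⟨u1, hu1, fun x1' hx1' => by
    obtain ⟨x2', hx2'⟩ := hstrict x1'
    exact ⟨x2', hprop x1' hx1' x2' hx2', hx2'⟩⟩
end

section
/- Given a relation R that is an ASR from S1 to S2, define the system S2' = (X2, U2, F2') where F2'(x2,u2) = F2(x2,u2) ∪ ⋃{R(F1(x1,u1)) : (x1,x2,u1,u2) in the ASR extended relation}. Then the available inputs of S2' coincide with those of S2 (U2'(x2) = U2(x2) for all x2), the identity relation on X2 is a WFRR from S2 to S2', and R is a WFRR from S1 to S2'. -/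
open Set

/-- ASR extended relation. -/
def extASR {X1 U1 X2 U2 : Type*} (F1 : X1 → U1 → Set X1) (F2 : X2 → U2 → Set X2)
    (R : Set (X1 × X2)) (x1 : X1) (x2 : X2) (u1 : U1) (u2 : U2) : Prop :=
  (x1, x2) ∈ R ∧ u2 ∈ avail F2 x2 ∧ u1 ∈ avail F1 x1 ∧
    ∀ x1' ∈ F1 x1 u1, ({y | (x1', y) ∈ R} ∩ F2 x2 u2).Nonempty

/-- The WFRR-extension of an abstraction. -/
def extSys {X1 U1 X2 U2 : Type*} (F1 : X1 → U1 → Set X1) (F2 : X2 → U2 → Set X2)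
    (R : Set (X1 × X2)) : X2 → U2 → Set X2 :=
  fun x2 u2 =>
    F2 x2 u2 ∪ ⋃ (x1 : X1) (u1 : U1) (_ : extASR F1 F2 R x1 x2 u1 u2), img R (F1 x1 u1)

/-- Any ASR abstraction can be completed into a WFRR abstraction by adding
transitions: the extension has the same available inputs, the identity is a WFRR
from `S2` to the extension, and `R` is a WFRR from `S1` to the extension. -/
theorem asr_to_wfrr_extension {X1 U1 X2 U2 : Type*}
    (F1 : X1 → U1 → Set X1) (F2 : X2 → U2 → Set X2) (R : Set (X1 × X2))
    (h : ASR F1 F2 R) :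
    (∀ x2, avail (extSys F1 F2 R) x2 = avail F2 x2) ∧
    WFRR F2 (extSys F1 F2 R) {p : X2 × X2 | p.1 = p.2} ∧
    WFRR F1 (extSys F1 F2 R) R := by
  have hav : ∀ x2, avail (extSys F1 F2 R) x2 = avail F2 x2 := by
    intro x2
    ext u2
    constructor
    · rintro ⟨y, hy⟩
      rcases hy with hy | hy
      · exact ⟨y, hy⟩
      · simp only [mem_iUnion] at hy
        rcases hy with ⟨x1, u1, hext, _⟩
        exact hext.2.1
    · rintro ⟨y, hy⟩
      exact ⟨y, Or.inl hy⟩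
  refine ⟨hav, ?_, ?_⟩
  · intro a b hab u2 hu2
    simp only [Set.mem_setOf_eq] at hab
    subst hab
    rw [hav] at hu2
    refine ⟨u2, hu2, ?_⟩
    intro x' hx' y hy
    simp only [Set.mem_setOf_eq] at hy
    subst hy
    exact Or.inl hx'
  · intro x1 x2 hR u2 hu2
    rw [hav] at hu2
    obtain ⟨u1, hu1, hprop⟩ := h x1 x2 hR u2 hu2
    refine ⟨u1, hu1, ?_⟩
    intro x1' hx1' x2' hx2'
    have hext : extASR F1 F2 R x1 x2 u1 u2 := by
      refine ⟨hR, hu2, hu1, ?_⟩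
      intro z hz
      obtain ⟨w, hw, hwR⟩ := hprop z hz
      exact ⟨w, hwR, hw⟩
    refine Or.inr ?_
    simp only [mem_iUnion]
    exact ⟨x1, u1, hext, x1', hx1', hx2'⟩
end

section
/- Necessity of WFRR: let R be a strict ASR from S1 to S2 with interface I (mapping into the ASR extended relation). If for every static controller C2 for S2 the memoryless refined controller C1 = C2 ∘_I R satisfies that every R-quantization of every trajectory of C1 × S1 is a trajectory of C2 × S2 (the memoryless controlled-simulability property), then R is a WFRR from S1 to S2. -/
open Set

/-- The memoryless refined controller `C1 = C2 ∘_I R`. -/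
def refinedCtrl {X1 U1 X2 U2 : Type*} (R : Set (X1 × X2))
    (I : X1 → X2 → U2 → Set U1) (C2 : X2 → Set U2) (x1 : X1) : Set U1 :=
  ⋃ (x2 : X2) (_ : (x1, x2) ∈ R) (u2 : U2) (_ : u2 ∈ C2 x2), I x1 x2 u2

/-- Necessity: if the memoryless concretization scheme works for every abstract
static controller, then `R` must be a WFRR. -/
theorem wfrr_necessary {X1 U1 X2 U2 : Type*}
    (F1 : X1 → U1 → Set X1) (F2 : X2 → U2 → Set X2) (R : Set (X1 × X2))
    (hnb2 : ∀ x2, (avail F2 x2).Nonempty)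
    (hstrict : Strict R) (hASR : ASR F1 F2 R)
    (I : X1 → X2 → U2 → Set U1)
    (hI : ∀ x1 x2, (x1, x2) ∈ R → ∀ u2 ∈ avail F2 x2,
      (I x1 x2 u2).Nonempty ∧ I x1 x2 u2 ⊆ {u1 | extASR F1 F2 R x1 x2 u1 u2})
    (hprop : ∀ C2 : X2 → Set U2, (∀ x2, (C2 x2).Nonempty ∧ C2 x2 ⊆ avail F2 x2) →
      ∀ T (x1 : ℕ → X1) (u1 : ℕ → U1),
        (∀ k < T, u1 k ∈ refinedCtrl R I C2 (x1 k) ∧ x1 (k + 1) ∈ F1 (x1 k) (u1 k)) →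
        ∀ x2 : ℕ → X2, (∀ k ≤ T, (x1 k, x2 k) ∈ R) →
          ∃ u2 : ℕ → U2, ∀ k < T, u2 k ∈ C2 (x2 k) ∧ x2 (k + 1) ∈ F2 (x2 k) (u2 k)) :
    WFRR F1 F2 R := by
  classical
  intro x1 x2 hR u2 hu2
  set C2 : X2 → Set U2 := fun y => if y = x2 then {u2} else avail F2 y with hC2
  have hC2ok : ∀ y, (C2 y).Nonempty ∧ C2 y ⊆ avail F2 y := by
    intro y
    by_cases h : y = x2
    · refine ⟨?_, ?_⟩ <;> simp [hC2, h]
      · exact hu2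
    · simp only [hC2, if_neg h]; exact ⟨hnb2 y, subset_rfl⟩
  obtain ⟨⟨u1, hu1I⟩, hsub⟩ := hI x1 x2 hR u2 hu2
  have hext : extASR F1 F2 R x1 x2 u1 u2 := hsub hu1I
  refine ⟨u1, hext.2.2.1, ?_⟩
  intro x1' hx1' x2' hR'
  have hu1C : u1 ∈ refinedCtrl R I C2 x1 := by
    refine Set.mem_iUnion.2 ⟨x2, Set.mem_iUnion.2 ⟨hR, Set.mem_iUnion.2 ⟨u2,
      Set.mem_iUnion.2 ⟨?_, hu1I⟩⟩⟩⟩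
    simp [hC2]
  obtain ⟨v, hv⟩ := hprop C2 hC2ok 1 (fun k => if k = 0 then x1 else x1')
    (fun _ => u1) (by
      intro k hk
      interval_cases k
      simpa using ⟨hu1C, hx1'⟩)
    (fun k => if k = 0 then x2 else x2') (by
      intro k hk
      interval_cases k
      · simpa using hR
      · simpa using hR')
  obtain ⟨hv0, hv1⟩ := hv 0 (by norm_num)
  simp [hC2] at hv0 hv1
  rwa [hv0] at hv1
end
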